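/- Let X and Y be finite simple graphs with p and n vertices respectively. Then the map sending a tuple (σ_1,...,σ_n, τ) with σ_a ∈ Aut(X) and τ ∈ Aut(Y) to the permutation (i,a) ↦ (σ_a(i), τ(a)) of X × Y is an injective group homomorphism from the wreath product Aut(X) ≀ Aut(Y) into Aut(X ∘ Y). -/

import Mathlib

/-- The lexicographic product `X ∘ Y`: vertex set `X × Y`, with
`(i,α) ~ (j,β)` iff (`α = β` and `i ~_X j`) or `α ~_Y β`. -/
def lexProd {α β : Type*} (X : SimpleGraph α) (Y : SimpleGraph β) :
    SimpleGraph (α × β) where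
  Adj p q := (p.2 = q.2 ∧ X.Adj p.1 q.1) ∨ Y.Adj p.2 q.2
  symm := by
    constructor
    rintro ⟨i, a⟩ ⟨j, b⟩ (⟨h1, h2⟩ | h)
    · exact Or.inl ⟨h1.symm, h2.symm⟩
    · exact Or.inr h.symm
  loopless := by
    constructor
    rintro ⟨i, a⟩ (⟨-, h⟩ | h)
    · exact X.irrefl h
    · exact Y.irrefl h

/-- A permutation of the vertices is a graph automorphism if it preserves adjacency. -/
def IsGraphAut {α : Type*} (X : SimpleGraph α) (σ : Equiv.Perm α) : Prop :=
  ∀ i j, X.Adj (σ i) (σ j) ↔ X.Adj i j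

/-- The permutation `(i,a) ↦ (σ_a i, τ a)` of `α × β` associated to an element
`((σ_a)_a, τ)` of the wreath product. -/
def wreathMap {α β : Type*} (σ : β → Equiv.Perm α) (τ : Equiv.Perm β) :
    Equiv.Perm (α × β) where
  toFun p := (σ p.2 p.1, τ p.2)
  invFun q := ((σ (τ.symm q.2)).symm q.1, τ.symm q.2)
  left_inv := by rintro ⟨i, a⟩; simp
  right_inv := by rintro ⟨j, b⟩; simp

/-- The map sending `((σ_a)_a, τ)` with each `σ_a ∈ Aut(X)` and
`τ ∈ Aut(Y)` to the permutation `(i,a) ↦ (σ_a i, τ a)` of `X × Y` is an injective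
group homomorphism from the wreath product `Aut(X) ≀ Aut(Y)`
(with multiplication `((σ_a)_a, τ)·((σ'_a)_a, τ') = ((σ_{τ' a} σ'_a)_a, τ τ')`)
into `Aut(X ∘ Y)`. -/
theorem wreath_embeds_in_aut_lexProd {α β : Type*} [Fintype α] [Fintype β]
    [Nonempty α] [Nonempty β] (X : SimpleGraph α) (Y : SimpleGraph β) :
    (∀ (σ : β → Equiv.Perm α) (τ : Equiv.Perm β),
        (∀ a, IsGraphAut X (σ a)) → IsGraphAut Y τ →
          IsGraphAut (lexProd X Y) (wreathMap σ τ)) ∧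
    (∀ (σ σ' : β → Equiv.Perm α) (τ τ' : Equiv.Perm β),
        (∀ a, IsGraphAut X (σ a)) → IsGraphAut Y τ →
        (∀ a, IsGraphAut X (σ' a)) → IsGraphAut Y τ' →
          wreathMap σ τ * wreathMap σ' τ' =
            wreathMap (fun a => σ (τ' a) * σ' a) (τ * τ')) ∧
    (∀ (σ σ' : β → Equiv.Perm α) (τ τ' : Equiv.Perm β),
        (∀ a, IsGraphAut X (σ a)) → IsGraphAut Y τ →
        (∀ a, IsGraphAut X (σ' a)) → IsGraphAut Y τ' →
          wreathMap σ τ = wreathMap σ' τ' → σ = σ' ∧ τ = τ') := by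
  refine ⟨?_, ?_, ?_⟩
  · rintro σ τ hσ hτ ⟨i, a⟩ ⟨j, b⟩
    simp only [lexProd, wreathMap, Equiv.coe_fn_mk]
    constructor
    · rintro (⟨h1, h2⟩ | h)
      · have hab : a = b := τ.injective h1
        subst hab
        exact Or.inl ⟨rfl, (hσ a i j).mp h2⟩
      · exact Or.inr ((hτ a b).mp h)
    · rintro (⟨h1, h2⟩ | h)
      · subst h1
        exact Or.inl ⟨rfl, (hσ a i j).mpr h2⟩
      · exact Or.inr ((hτ a b).mpr h)
  · rintro σ σ' τ τ' - - - -
    ext ⟨i, a⟩ <;> simp [wreathMap]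
  · rintro σ σ' τ τ' - - - - h
    have key : ∀ i a, (σ a i, τ a) = (σ' a i, τ' a) := by
      intro i a
      have := congrArg (fun e : Equiv.Perm (α × β) => e (i, a)) h
      simpa [wreathMap] using this
    constructor
    · funext a; ext i; exact (Prod.mk.injEq _ _ _ _).mp (key i a) |>.1
    · ext a
      obtain ⟨i⟩ := ‹Nonempty α›
      exact (Prod.mk.injEq _ _ _ _).mp (key i a) |>.2
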